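/- Let (X, f) be a dynamical system, where X is a compact uniform space and f : X → X is a continuous surjection, and let E and D be entourages such that every D-pseudo orbit contained in CR(f) can be E-traced by some point of X. If T ⊆ ℕ is a thick set and (x_i)_{i∈ℕ} is a sequence with all x_i ∈ CR(f) which is a D-pseudo orbit on T, then there exist a thick set T' ⊆ T and a point z ∈ X such that (f^j(z), x_j) ∈ E for every j ∈ T'. -/

import Mathlib

open Filter Set Function

section Defs

variable {X : Type*} [UniformSpace X]

/-- A `D`-chain from `x` to `y`: a finite sequence `x = c 0, c 1, …, c n` (`n ≥ 1`)
with `c n = y` and `(f (c i), c (i+1)) ∈ D` for all `i < n`. -/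
def DChain (f : X → X) (D : Set (X × X)) (x y : X) : Prop :=
  ∃ n : ℕ, 1 ≤ n ∧ ∃ c : ℕ → X, c 0 = x ∧ c n = y ∧ ∀ i < n, (f (c i), c (i + 1)) ∈ D

/-- A `D`-chain from `x` to `y` contained in the set `S`. -/
def DChainIn (f : X → X) (D : Set (X × X)) (S : Set X) (x y : X) : Prop :=
  ∃ n : ℕ, 1 ≤ n ∧ ∃ c : ℕ → X, c 0 = x ∧ c n = y ∧ (∀ i ≤ n, c i ∈ S) ∧
    ∀ i < n, (f (c i), c (i + 1)) ∈ D

/-- The set of chain-recurrent points of `f`. -/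
def CR (f : X → X) : Set X :=
  {x | ∀ D ∈ uniformity X, DChain f D x x}

/-- The set of non-wandering points of `f`. -/
def NonWandering (f : X → X) : Set X :=
  {x | ∀ U : Set X, IsOpen U → x ∈ U → ∃ n : ℕ, 1 ≤ n ∧ (f^[n] '' U ∩ U).Nonempty}

/-- `(x i)` is a `D`-pseudo orbit on the set `A ⊆ ℕ`. -/
def PseudoOrbitOn (f : X → X) (D : Set (X × X)) (x : ℕ → X) (A : Set ℕ) : Prop :=
  ∀ i ∈ A, (f (x i), x (i + 1)) ∈ D

/-- `(x i)` is `E`-traced by `y` on the set `B ⊆ ℕ`. -/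
def TracedOn (f : X → X) (E : Set (X × X)) (x : ℕ → X) (y : X) (B : Set ℕ) : Prop :=
  ∀ i ∈ B, (f^[i] y, x i) ∈ E

/-- Topological shadowing. -/
def TopShadowing (f : X → X) : Prop :=
  ∀ E ∈ uniformity X, ∃ D ∈ uniformity X,
    ∀ x : ℕ → X, PseudoOrbitOn f D x Set.univ → ∃ y : X, TracedOn f E x y Set.univ

/-- Topological `(F, G)`-shadowing for families `F`, `G` of subsets of `ℕ`. -/
def FGShadowing (f : X → X) (F G : Set (Set ℕ)) : Prop :=
  ∀ E ∈ uniformity X, ∃ D ∈ uniformity X,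
    ∀ x : ℕ → X, (∃ A ∈ F, PseudoOrbitOn f D x A) →
      ∃ y : X, ∃ B ∈ G, TracedOn f E x y B

end Defs

/-- A set `A ⊆ ℕ` is syndetic: gaps are bounded. -/
def Syndetic (A : Set ℕ) : Prop :=
  ∃ M : ℕ, ∀ k : ℕ, ∃ j ∈ A, k ≤ j ∧ j ≤ k + M

/-- A set `A ⊆ ℕ` is thick: contains arbitrarily long blocks of consecutive numbers. -/
def Thick (A : Set ℕ) : Prop :=
  ∀ n : ℕ, ∃ k : ℕ, ∀ i < n, k + i ∈ A

/-- A set `A ⊆ ℕ` is thickly syndetic. -/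
def ThicklySyndetic (A : Set ℕ) : Prop :=
  ∀ n : ℕ, Syndetic {k : ℕ | ∀ i < n, k + i ∈ A}

/-- A set `A ⊆ ℕ` is piecewise syndetic. -/
def PiecewiseSyndetic (A : Set ℕ) : Prop :=
  ∃ T S : Set ℕ, Thick T ∧ Syndetic S ∧ A = T ∩ S

/-- The family of thick subsets of `ℕ`. -/
def thickFamily : Set (Set ℕ) := {A | Thick A}

/-- The family of piecewise syndetic subsets of `ℕ`. -/
def psFamily : Set (Set ℕ) := {A | PiecewiseSyndetic A}

open scoped Classical in
/-- The lower density of a subset of `ℕ`. -/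
noncomputable def lowerDensity (A : Set ℕ) : ℝ :=
  Filter.atTop.liminf fun n : ℕ => ((Finset.range n).filter (· ∈ A)).card / (n : ℝ)

/-- The family of subsets of `ℕ` of lower density `1`. -/
noncomputable def densityOneFamily : Set (Set ℕ) := {A | lowerDensity A = 1}

section Dyn

variable {X : Type*} [UniformSpace X]

/-- `x` is a minimal point of `f`. -/
def MinimalPt (f : X → X) (x : X) : Prop :=
  ∀ U : Set X, IsOpen U → x ∈ U → Syndetic {n : ℕ | f^[n] x ∈ U}

/-- `(x, y)` is a syndetically proximal pair for `f`. -/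
def SyndProx (f : X → X) (x y : X) : Prop :=
  ∀ E ∈ uniformity X, Syndetic {n : ℕ | (f^[n] x, f^[n] y) ∈ E}

end Dyn

lemma comp3_mem {X : Type*} [UniformSpace X] {U : Set (X × X)} (hU : U ∈ uniformity X) :
    ∃ Z ∈ uniformity X, SetRel.IsSymm Z ∧ SetRel.comp (SetRel.comp Z Z) Z ⊆ U := by
  obtain ⟨W, hW, hWs, hWc⟩ := comp_symm_mem_uniformity_sets hU
  obtain ⟨Z, hZ, hZs, hZc⟩ := comp_symm_mem_uniformity_sets hW
  refine ⟨Z ∩ W, inter_mem hZ hW, ?_, ?_⟩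
  · haveI := hZs; haveI := hWs; infer_instance
  · intro p hp
    obtain ⟨b, ⟨a, ha, hab⟩, hbp⟩ := hp
    exact hWc (SetRel.prodMk_mem_comp (hZc (SetRel.prodMk_mem_comp ha.1 hab.1)) hbp.2)

lemma cyc_step {X : Type*} [UniformSpace X] (f : X → X) {V : Set (X × X)} {c : ℕ → X} {n : ℕ}
    (hn : 1 ≤ n) (h0 : c 0 = c n) (hstep : ∀ i < n, (f (c i), c (i + 1)) ∈ V) :
    ∀ s, (f (c (s % n)), c ((s + 1) % n)) ∈ V := by
  intro s
  have hr : s % n < n := Nat.mod_lt _ hn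
  rcases Nat.lt_or_ge (s % n + 1) n with h | h
  · have h1 : (s + 1) % n = s % n + 1 := by
      have : (s + 1) % n = (s % n + 1 % n) % n := Nat.add_mod s 1 n
      rw [this, Nat.add_mod_mod, Nat.mod_eq_of_lt h]
    rw [h1]
    exact hstep _ hr
  · have h2 : s % n = n - 1 := by omega
    have h3 : (s + 1) % n = 0 := by
      have : (s + 1) % n = (s % n + 1 % n) % n := Nat.add_mod s 1 n
      rw [this, Nat.add_mod_mod, h2, Nat.sub_add_cancel hn, Nat.mod_self]
    rw [h3, h0, h2]
    have := hstep (n - 1) (by omega)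
    rwa [Nat.sub_add_cancel hn] at this

lemma conley_in_CR {X : Type*} [UniformSpace X] [CompactSpace X] {f : X → X}
    (hf : Continuous f) {w : X} (hw : w ∈ CR f) {V : Set (X × X)} (hV : V ∈ uniformity X) :
    ∃ n : ℕ, 1 ≤ n ∧ ∃ c : ℕ → X, c 0 = w ∧ c n = w ∧ (∀ i, c i ∈ CR f) ∧
      ∀ i < n, (f (c i), c (i + 1)) ∈ V := by
  classical
  have hfu : UniformContinuous f := CompactSpace.uniformContinuous_of_continuous hf
  -- the set of points lying on U-chains from w to w
  set P : Set (X × X) → Set X := fun U =>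
    {p | ∃ n : ℕ, 1 ≤ n ∧ ∃ c : ℕ → X, c 0 = w ∧ c n = w ∧
      (∀ i < n, (f (c i), c (i + 1)) ∈ U) ∧ ∃ i, i ≤ n ∧ c i = p} with hP
  set K : Set X := ⋂ (U : Set (X × X)) (_ : U ∈ uniformity X), closure (P U) with hK
  have hPmono : ∀ {U U' : Set (X × X)}, U ⊆ U' → P U ⊆ P U' := by
    rintro U U' hUU' p ⟨n, hn, c, h0, hn', hs, i, hin, hip⟩
    exact ⟨n, hn, c, h0, hn', fun i hi => hUU' (hs i hi), i, hin, hip⟩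
  have hwP : ∀ U ∈ uniformity X, w ∈ P U := by
    intro U hU
    obtain ⟨n, hn, c, h0, hn', hs⟩ := hw U hU
    exact ⟨n, hn, c, h0, hn', hs, 0, Nat.zero_le _, h0⟩
  have hwK : w ∈ K := mem_iInter₂.mpr fun U hU => subset_closure (hwP U hU)
  -- every point of K is chain recurrent
  have hKCR : K ⊆ CR f := by
    intro y hy U hU
    obtain ⟨U₂, hU₂, hU₂s, hU₂c⟩ := comp3_mem hU
    have hcf : (fun p : X × X => (f p.1, f p.2)) ⁻¹' U₂ ∈ uniformity X := hfu hU₂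
    have hU₃ : U₂ ∩ ((fun p : X × X => (f p.1, f p.2)) ⁻¹' U₂) ∈ uniformity X :=
      inter_mem hU₂ hcf
    set U₃ := U₂ ∩ ((fun p : X × X => (f p.1, f p.2)) ⁻¹' U₂) with hU₃def
    have hrefl₂ : ∀ a : X, (a, a) ∈ U₂ := fun a => refl_mem_uniformity hU₂
    have comp3' : ∀ {a b c' d : X}, (a, b) ∈ U₂ → (b, c') ∈ U₂ → (c', d) ∈ U₂ → (a, d) ∈ U :=
      fun h1 h2 h3 => hU₂c (SetRel.prodMk_mem_comp (SetRel.prodMk_mem_comp h1 h2) h3)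
    have hy3 : y ∈ closure (P U₃) := by
      have := mem_iInter₂.mp hy U₃ hU₃; exact this
    obtain ⟨p, hpball, hpP⟩ : ∃ p, p ∈ UniformSpace.ball y U₃ ∧ p ∈ P U₃ := by
      obtain ⟨p, hp⟩ := (UniformSpace.mem_closure_iff_ball).mp hy3 hU₃
      exact ⟨p, hp.1, hp.2⟩
    have hyp : (y, p) ∈ U₃ := hpball
    obtain ⟨n, hn1, c, hc0, hcn, hcs, i, hin, hcip⟩ := hpP
    have hcyc := cyc_step f hn1 (hc0.trans hcn.symm) hcs
    set ii := i % n with hii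
    have hpii : c ii = p := by
      rcases Nat.lt_or_ge i n with h | h
      · rw [hii, Nat.mod_eq_of_lt h]; exact hcip
      · have hin' : i = n := le_antisymm hin h
        rw [hii, hin', Nat.mod_self, hc0, ← hcn, ← hin']
        exact hcip
    have hiin : ii % n = ii := Nat.mod_eq_of_lt (by rw [hii]; exact Nat.mod_lt _ hn1)
    refine ⟨n, hn1, fun j => if j = 0 ∨ n ≤ j then y else c ((ii + j) % n), by simp, by simp, ?_⟩
    intro j hj
    have hfyfp : (f y, f p) ∈ U₂ := hyp.2
    have hpy : (p, y) ∈ U₂ := hU₂s.symm _ _ hyp.1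
    by_cases hj0 : j = 0
    · subst hj0
      simp only [if_pos (Or.inl rfl)]
      by_cases hn1' : n = 1
      · have h01 : (1 : ℕ) = 0 ∨ n ≤ 1 := Or.inr (by omega)
        simp only [if_pos h01]
        -- (f y, y) ∈ U
        have step := hcyc ii
        rw [hiin, hpii] at step
        have : c ((ii + 1) % n) = p := by
          rw [hn1'] at hii ⊢
          simp [Nat.mod_one] at hii ⊢
          rw [← hpii, hii]
        rw [this] at step
        exact comp3' hfyfp step.1 hpy
      · have h1n : ¬((1 : ℕ) = 0 ∨ n ≤ 1) := by push_neg; exact ⟨one_ne_zero, by omega⟩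
        simp only [if_neg h1n]
        have step := hcyc ii
        rw [hiin, hpii] at step
        exact comp3' hfyfp step.1 (hrefl₂ _)
    · have hjn : ¬(j = 0 ∨ n ≤ j) := by push_neg; exact ⟨hj0, by omega⟩
      simp only [if_neg hjn]
      by_cases hj1 : j + 1 = n
      · have hIf : (j + 1 = 0 ∨ n ≤ j + 1) := Or.inr (by omega)
        simp only [if_pos hIf]
        have step := hcyc (ii + j)
        have : (ii + j + 1) % n = ii := by
          rw [show ii + j + 1 = ii + n by omega, Nat.add_mod_right, hiin]
        rw [this, hpii] at step
        exact comp3' (hrefl₂ _) step.1 hpy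
      · have hIf : ¬(j + 1 = 0 ∨ n ≤ j + 1) := by push_neg; exact ⟨by omega, by omega⟩
        simp only [if_neg hIf]
        have step := hcyc (ii + j)
        rw [show ii + j + 1 = ii + (j + 1) by ring] at step
        exact comp3' (hrefl₂ _) step.1 (hrefl₂ _)
  -- step B : find a chain inside K
  obtain ⟨V₁, hV₁, hV₁s, hV₁c⟩ := comp3_mem hV
  have hVcf : (fun p : X × X => (f p.1, f p.2)) ⁻¹' V₁ ∈ uniformity X := hfu hV₁
  obtain ⟨V₂, hV₂u, hV₂sub⟩ := (uniformity_hasBasis_open_symmetric.mem_iff).mp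
    (inter_mem hV₁ hVcf)
  obtain ⟨hV₂mem, hV₂o, hV₂s⟩ := hV₂u
  set U₀ : Set X := ⋃ k ∈ K, {z | (z, k) ∈ V₂} with hU₀def
  have hU₀o : IsOpen U₀ := by
    refine isOpen_biUnion fun k _ => ?_
    have : {z : X | (z, k) ∈ V₂} = (fun z => (z, k)) ⁻¹' V₂ := rfl
    rw [this]
    exact hV₂o.preimage (continuous_id.prodMk continuous_const)
  have hKU₀ : K ⊆ U₀ := fun k hk =>
    mem_biUnion hk (refl_mem_uniformity hV₂mem)
  have hinter : (Set.univ : Set X) ∩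
      ⋂ (i : {U : Set (X × X) // U ∈ uniformity X}), (closure (P i.1) ∩ U₀ᶜ) = ∅ := by
    ext z
    simp only [Set.mem_inter_iff, Set.mem_univ, true_and, Set.mem_iInter,
      Set.mem_empty_iff_false, iff_false]
    intro hall
    have hzK : z ∈ K := mem_iInter₂.mpr fun U hU => (hall ⟨U, hU⟩).1
    exact (hall ⟨_, hV₂mem⟩).2 (hKU₀ hzK)
  obtain ⟨tfin, htfin⟩ := isCompact_univ.elim_finite_subfamily_closed _
    (fun i => isClosed_closure.inter (hU₀o.isClosed_compl)) hinter
  have hWu : (V₂ ∩ ⋂ i ∈ tfin, (i : {U : Set (X × X) // U ∈ uniformity X}).1) ∈ uniformity X := by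
    refine inter_mem hV₂mem ((biInter_finset_mem tfin).mpr fun i _ => i.2)
  set W := V₂ ∩ ⋂ i ∈ tfin, (i : {U : Set (X × X) // U ∈ uniformity X}).1 with hWdef
  have hAW : closure (P W) ⊆ U₀ := by
    intro z hz
    by_contra hzU
    have hmem : z ∈ (Set.univ : Set X) ∩ ⋂ i ∈ tfin, (closure (P i.1) ∩ U₀ᶜ) := by
      refine ⟨trivial, mem_iInter₂.mpr fun i hi => ⟨?_, hzU⟩⟩
      refine closure_mono (hPmono ?_) hz
      intro q hq
      exact (mem_iInter₂.mp hq.2 i hi : q ∈ i.1)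
    rw [htfin] at hmem
    exact hmem
  obtain ⟨n, hn1, c, hc0, hcn, hcs⟩ := hw W hWu
  have hcU₀ : ∀ i, i ≤ n → ∃ k, k ∈ K ∧ (c i, k) ∈ V₂ := by
    intro i hi
    have : c i ∈ U₀ := hAW (subset_closure ⟨n, hn1, c, hc0, hcn, hcs, i, hi, rfl⟩)
    simpa only [hU₀def, mem_iUnion, exists_prop, mem_setOf_eq] using this
  have hcU₀' : ∀ i, ∃ k, i ≤ n → k ∈ K ∧ (c i, k) ∈ V₂ := by
    intro i
    by_cases h : i ≤ n
    · obtain ⟨k, hk⟩ := hcU₀ i h; exact ⟨k, fun _ => hk⟩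
    · exact ⟨w, fun h' => absurd h' h⟩
  choose kf hkf using hcU₀'
  set k' : ℕ → X := fun i => if i = 0 ∨ n ≤ i then w else kf i with hk'def
  have hk'K : ∀ i, k' i ∈ K := by
    intro i
    show (if i = 0 ∨ n ≤ i then w else kf i) ∈ K
    split
    · exact hwK
    · next h => exact (hkf i (by push_neg at h; omega)).1
  have hk'c : ∀ i, i ≤ n → (c i, k' i) ∈ V₂ := by
    intro i hi
    show (c i, if i = 0 ∨ n ≤ i then w else kf i) ∈ V₂
    split
    · next h =>
      rcases h with h | h
      · subst h; rw [hc0]; exact refl_mem_uniformity hV₂mem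
      · have : i = n := le_antisymm hi h
        subst this; rw [hcn]; exact refl_mem_uniformity hV₂mem
    · exact (hkf i hi).2
  refine ⟨n, hn1, k', by simp [hk'def], by simp [hk'def], fun i => hKCR (hk'K i), ?_⟩
  intro j hj
  have h1 : (k' j, c j) ∈ V₂ := hV₂s.symm _ _ (hk'c j (le_of_lt hj))
  have h2 : (f (k' j), f (c j)) ∈ V₁ := (hV₂sub h1).2
  have h3' : (f (c j), c (j + 1)) ∈ V₁ := (hV₂sub (hcs j hj).1).1
  have h4 : (c (j + 1), k' (j + 1)) ∈ V₁ := (hV₂sub (hk'c (j + 1) hj)).1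
  exact hV₁c (SetRel.prodMk_mem_comp (SetRel.prodMk_mem_comp h2 h3') h4)

/-- if every D-pseudo orbit in CR(f) can be E-traced, then D-pseudo orbits
in CR(f) on thick sets can be E-traced on thick subsets. -/
theorem trace_on_thick_of_trace_in_CR
    {X : Type*} [UniformSpace X] [CompactSpace X]
    (f : X → X) (hf : Continuous f) (hsurj : Function.Surjective f)
    (E D : Set (X × X)) (hE : E ∈ uniformity X) (hD : D ∈ uniformity X)
    (htr : ∀ x : ℕ → X, (∀ i : ℕ, x i ∈ CR f) → PseudoOrbitOn f D x Set.univ →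
      ∃ z : X, TracedOn f E x z Set.univ)
    (T : Set ℕ) (hT : Thick T)
    (x : ℕ → X) (hxCR : ∀ i : ℕ, x i ∈ CR f) (hx : PseudoOrbitOn f D x T) :
    ∃ T' : Set ℕ, T' ⊆ T ∧ Thick T' ∧ ∃ z : X, ∀ j ∈ T', (f^[j] z, x j) ∈ E := by
  classical
  have hfu : UniformContinuous f := CompactSpace.uniformContinuous_of_continuous hf
  obtain ⟨B, hB, hBs, hBc⟩ := comp3_mem hD
  have hrefl : ∀ a : X, (a, a) ∈ B := fun a => refl_mem_uniformity hB
  have hcomp3 : ∀ {a b c' d : X}, (a, b) ∈ B → (b, c') ∈ B → (c', d) ∈ B → (a, d) ∈ D :=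
    fun h1 h2 h3 => hBc (SetRel.prodMk_mem_comp (SetRel.prodMk_mem_comp h1 h2) h3)
  have hcomp2 : ∀ {a b c' : X}, (a, b) ∈ B → (b, c') ∈ B → (a, c') ∈ D :=
    fun h1 h2 => hcomp3 h1 h2 (hrefl _)
  have hBD : ∀ {a b : X}, (a, b) ∈ B → (a, b) ∈ D := fun h => hcomp2 h (hrefl _)
  have hUB : (fun p : X × X => (f p.1, f p.2)) ⁻¹' B ∈ uniformity X := hfu hB
  obtain ⟨D₁, hD₁, hD₁s, hD₁c⟩ := comp_symm_mem_uniformity_sets (inter_mem hB hUB)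
  have hSB : ∀ {a b : X}, (a, b) ∈ SetRel.comp D₁ D₁ → (a, b) ∈ B := fun h => (hD₁c h).1
  have hSf : ∀ {a b : X}, (a, b) ∈ SetRel.comp D₁ D₁ → (f a, f b) ∈ B := fun h => (hD₁c h).2
  have hSsymm : ∀ {a b : X}, (a, b) ∈ SetRel.comp D₁ D₁ → (b, a) ∈ SetRel.comp D₁ D₁ := by
    rintro a b ⟨m, h1, h2⟩
    exact ⟨m, hD₁s.symm _ _ h2, hD₁s.symm _ _ h1⟩
  -- finite net
  obtain ⟨net, hnetfin, hnetcov⟩ := isCompact_univ.totallyBounded D₁ hD₁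
  have hnp : ∀ z : X, ∃ y, y ∈ net ∧ (z, y) ∈ D₁ := by
    intro z
    have := hnetcov (Set.mem_univ z)
    simp only [mem_iUnion, mem_setOf_eq, exists_prop] at this
    exact this
  choose netpt hnp1 hnp2 using hnp
  set tF := hnetfin.toFinset with htF
  have hnetptF : ∀ z, netpt z ∈ tF := fun z => hnetfin.mem_toFinset.mpr (hnp1 z)
  -- a representative CR point in each ball, with its Conley loop
  have hwbspec : ∀ b : X, ∃ jb : ℕ, (∃ j, netpt (x j) = b) → netpt (x jb) = b := by
    intro b
    by_cases h : ∃ j, netpt (x j) = b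
    · exact ⟨h.choose, fun _ => h.choose_spec⟩
    · exact ⟨0, fun h' => absurd h' h⟩
  choose jb hjb using hwbspec
  have hloops : ∀ b : X, ∃ n c, 1 ≤ n ∧ (c : ℕ → X) 0 = x (jb b) ∧ c n = x (jb b) ∧
      (∀ i, c i ∈ CR f) ∧ ∀ i < n, (f (c i), c (i + 1)) ∈ B := by
    intro b
    obtain ⟨n, h1, c, h2, h3, h4, h5⟩ := conley_in_CR hf (hxCR (jb b)) hB
    exact ⟨n, c, h1, h2, h3, h4, h5⟩
  choose nB cB hl1 hl2 hl3 hl4 hl5 using hloops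
  set Λ := ∏ b ∈ tF, nB b with hΛ
  have hΛ1 : 1 ≤ Λ := Finset.one_le_prod' fun b _ => hl1 b
  -- thick blocks with lower bound on position
  have hT' : ∀ n P₀ : ℕ, ∃ k, P₀ ≤ k ∧ ∀ i < n, k + i ∈ T := by
    intro n P₀
    obtain ⟨a, ha⟩ := hT (n + P₀)
    refine ⟨max a P₀, le_max_right _ _, fun i hi => ?_⟩
    have h1 : max a P₀ + i = a + (max a P₀ - a + i) := by omega
    rw [h1]
    exact ha _ (by omega)
  -- per-block pigeonhole
  have hblock : ∀ m : ℕ, ∃ pq : ℕ × ℕ,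
      m + 1 ≤ pq.1 ∧ pq.1 + (m + 1) ≤ pq.2 ∧ Λ ∣ (pq.2 - pq.1) ∧
      (∀ j, pq.1 ≤ j → j ≤ pq.2 → j ∈ T) ∧ netpt (x pq.1) = netpt (x pq.2) := by
    intro m
    set m' := m + 1 with hm'
    set L := tF.card * (Λ * m') + (Λ * m') + 1 with hL
    obtain ⟨β, hβ1, hβ2⟩ := hT' L m'
    have hmaps : ∀ s ∈ Finset.range (tF.card + 1), netpt (x (β + s * (Λ * m'))) ∈ tF :=
      fun s _ => hnetptF _
    obtain ⟨s₁, hs₁, s₂, hs₂, hne, heq⟩ :=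
      Finset.exists_ne_map_eq_of_card_lt_of_maps_to (by simp) hmaps
    have hkey : ∃ u v : ℕ, u < v ∧ v ≤ tF.card ∧
        netpt (x (β + u * (Λ * m'))) = netpt (x (β + v * (Λ * m'))) := by
      rcases Nat.lt_or_ge s₁ s₂ with hlt | hge
      · exact ⟨s₁, s₂, hlt, Nat.lt_succ_iff.mp (Finset.mem_range.mp hs₂), heq⟩
      · have hgt : s₂ < s₁ := lt_of_le_of_ne hge (Ne.symm hne)
        exact ⟨s₂, s₁, hgt, Nat.lt_succ_iff.mp (Finset.mem_range.mp hs₁), heq.symm⟩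
    obtain ⟨u, v, huv, hvle, hnetuv⟩ := hkey
    refine ⟨(β + u * (Λ * m'), β + v * (Λ * m')), ?_, ?_, ?_, ?_, hnetuv⟩
    · show m + 1 ≤ β + u * (Λ * m')
      omega
    · show β + u * (Λ * m') + (m + 1) ≤ β + v * (Λ * m')
      have h1 : m' ≤ Λ * m' := Nat.le_mul_of_pos_left _ (by omega)
      have h2 : u * (Λ * m') + 1 * (Λ * m') ≤ v * (Λ * m') := by
        rw [← Nat.add_mul]
        exact Nat.mul_le_mul_right _ (by omega)
      omega
    · show Λ ∣ (β + v * (Λ * m') - (β + u * (Λ * m')))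
      have h3 : β + v * (Λ * m') - (β + u * (Λ * m')) = (v - u) * (Λ * m') := by
        rw [Nat.add_sub_add_left, ← Nat.sub_mul]
      rw [h3]
      exact (dvd_mul_right Λ m').mul_left (v - u)
    · intro j hj1 hj2
      have hjβ : β ≤ j := le_trans (Nat.le_add_right _ _) hj1
      have h4 : v * (Λ * m') ≤ tF.card * (Λ * m') := Nat.mul_le_mul_right _ hvle
      have h5 : j = β + (j - β) := by omega
      rw [h5]
      exact hβ2 _ (by omega)
  choose PQf hbl1 hbl2 hbl3 hbl4 hbl5 using hblock
  -- global pigeonhole over (ball, residue)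
  set χ : ℕ → {b // b ∈ tF} × Fin Λ := fun m =>
    (⟨netpt (x (PQf m).1), hnetptF _⟩, ⟨(PQf m).1 % Λ, Nat.mod_lt _ (by omega)⟩) with hχ
  obtain ⟨⟨bF, ρF⟩, hfib⟩ := Finite.exists_infinite_fiber χ
  set bv := (bF : X) with hbv
  set ρ := (ρF : ℕ) with hρdef
  have hMinf : (χ ⁻¹' {(bF, ρF)}).Infinite := Set.infinite_coe_iff.mp hfib
  have hM : ∀ N : ℕ, ∃ m, N < m ∧ netpt (x (PQf m).1) = bv ∧ (PQf m).1 % Λ = ρ := by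
    intro N
    obtain ⟨m, hm, hNm⟩ := hMinf.exists_gt N
    have hm' : χ m = (bF, ρF) := hm
    exact ⟨m, hNm, congrArg (fun p => (p.1 : X)) hm', congrArg (fun p => (p.2 : ℕ)) hm'⟩
  obtain ⟨m₀, _, hm₀b, _⟩ := hM 0
  have hjbv : netpt (x (jb bv)) = bv := hjb bv ⟨(PQf m₀).1, hm₀b⟩
  set w := x (jb bv) with hwdef
  set lam := nB bv with hlamdef
  set c := cB bv with hcdef
  have hlam1 : 1 ≤ lam := hl1 bv
  have hc0 : c 0 = w := hl2 bv
  have hclam : c lam = w := hl3 bv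
  have hcCR : ∀ i, c i ∈ CR f := hl4 bv
  have hlamΛ : lam ∣ Λ := Finset.dvd_prod_of_mem _ bF.2
  have hcyc := cyc_step f hlam1 (hc0.trans hclam.symm) (hl5 bv)
  set cl : ℕ → X := fun s => c (s % lam) with hcl
  have hcl0 : cl 0 = w := by
    show c (0 % lam) = w
    rw [Nat.zero_mod]; exact hc0
  have hclstep : ∀ s, (f (cl s), cl (s + 1)) ∈ B := fun s => hcyc s
  have hclw : ∀ s, lam ∣ s → cl s = w := by
    rintro s ⟨d, rfl⟩
    show c (lam * d % lam) = w
    rw [Nat.mul_mod_right]; exact hc0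
  have hclCR : ∀ s, cl s ∈ CR f := fun s => hcCR _
  have hSclose : ∀ m, netpt (x (PQf m).1) = bv →
      (x (PQf m).1, w) ∈ SetRel.comp D₁ D₁ ∧ (x (PQf m).2, w) ∈ SetRel.comp D₁ D₁ := by
    intro m hmb
    have h2 : netpt (x (PQf m).2) = bv := by rw [← hbl5 m]; exact hmb
    have hwball : (bv, w) ∈ D₁ := hD₁s.symm w bv (by rw [← hjbv]; exact hnp2 _)
    constructor
    · exact ⟨bv, by rw [← hmb]; exact hnp2 _, hwball⟩
    · exact ⟨bv, by rw [← h2]; exact hnp2 _, hwball⟩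
  have key : ∀ bound len : ℕ, ∃ pq : ℕ × ℕ,
      bound < pq.1 ∧ pq.1 + len ≤ pq.2 ∧ pq.1 % Λ = ρ ∧ pq.2 % Λ = ρ ∧
      (∀ j, pq.1 ≤ j → j ≤ pq.2 → j ∈ T) ∧
      (x pq.1, w) ∈ SetRel.comp D₁ D₁ ∧ (x pq.2, w) ∈ SetRel.comp D₁ D₁ := by
    intro bound len
    obtain ⟨m, hm1, hm2, hm3⟩ := hM (max bound len)
    have hbm : bound < m := lt_of_le_of_lt (le_max_left _ _) hm1
    have hlm : len ≤ m := le_of_lt (lt_of_le_of_lt (le_max_right _ _) hm1)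
    refine ⟨PQf m, ?_, ?_, hm3, ?_, hbl4 m, (hSclose m hm2).1, (hSclose m hm2).2⟩
    · have := hbl1 m; omega
    · have := hbl2 m; omega
    · obtain ⟨d, hd⟩ := hbl3 m
      have hpq : (PQf m).1 ≤ (PQf m).2 := by have := hbl2 m; omega
      have h6 : (PQf m).2 = (PQf m).1 + Λ * d := by omega
      rw [h6, Nat.add_mul_mod_self_left, hm3]
  -- recursive choice of blocks
  set g : ℕ → ℕ × ℕ := fun k => Nat.rec (Classical.choose (key 0 1))
      (fun k ih => Classical.choose (key ih.2 (k + 2))) k with hgdef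
  set Pf : ℕ → ℕ := fun k => (g k).1 with hPfdef
  set Qf : ℕ → ℕ := fun k => (g k).2 with hQfdef
  have hspec0 := Classical.choose_spec (key 0 1)
  have hspecS : ∀ k, Qf k < (Classical.choose (key (g k).2 (k + 2))).1 ∧
      (Classical.choose (key (g k).2 (k + 2))).1 + (k + 2) ≤
        (Classical.choose (key (g k).2 (k + 2))).2 ∧
      (Classical.choose (key (g k).2 (k + 2))).1 % Λ = ρ ∧
      (Classical.choose (key (g k).2 (k + 2))).2 % Λ = ρ ∧
      (∀ j, (Classical.choose (key (g k).2 (k + 2))).1 ≤ j →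
        j ≤ (Classical.choose (key (g k).2 (k + 2))).2 → j ∈ T) ∧
      (x (Classical.choose (key (g k).2 (k + 2))).1, w) ∈ SetRel.comp D₁ D₁ ∧
      (x (Classical.choose (key (g k).2 (k + 2))).2, w) ∈ SetRel.comp D₁ D₁ :=
    fun k => Classical.choose_spec (key (g k).2 (k + 2))
  have hgsucc : ∀ k, g (k + 1) = Classical.choose (key (g k).2 (k + 2)) := fun k => rfl
  have hPQ : ∀ k, Pf k + (k + 1) ≤ Qf k := by
    intro k
    cases k with
    | zero => exact hspec0.2.1
    | succ k =>
      have h := (hspecS k).2.1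
      show (g (k + 1)).1 + (k + 1 + 1) ≤ (g (k + 1)).2
      rw [hgsucc k]
      exact h
  have hQP : ∀ k, Qf k < Pf (k + 1) := by
    intro k
    have h := (hspecS k).1
    show Qf k < (g (k + 1)).1
    rw [hgsucc k]
    exact h
  have hPmod : ∀ k, Pf k % Λ = ρ := by
    intro k
    cases k with
    | zero => exact hspec0.2.2.1
    | succ k =>
      show (g (k + 1)).1 % Λ = ρ
      rw [hgsucc k]; exact (hspecS k).2.2.1
  have hQmod : ∀ k, Qf k % Λ = ρ := by
    intro k
    cases k with
    | zero => exact hspec0.2.2.2.1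
    | succ k =>
      show (g (k + 1)).2 % Λ = ρ
      rw [hgsucc k]; exact (hspecS k).2.2.2.1
  have hTblk : ∀ k, ∀ j, Pf k ≤ j → j ≤ Qf k → j ∈ T := by
    intro k
    cases k with
    | zero => exact hspec0.2.2.2.2.1
    | succ k =>
      intro j h1 h2
      have h1' : (Classical.choose (key (g k).2 (k + 2))).1 ≤ j := by
        rw [← hgsucc k]; exact h1
      have h2' : j ≤ (Classical.choose (key (g k).2 (k + 2))).2 := by
        rw [← hgsucc k]; exact h2
      exact (hspecS k).2.2.2.2.1 j h1' h2'
  have hSP : ∀ k, (x (Pf k), w) ∈ SetRel.comp D₁ D₁ := by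
    intro k
    cases k with
    | zero => exact hspec0.2.2.2.2.2.1
    | succ k =>
      show (x (g (k + 1)).1, w) ∈ SetRel.comp D₁ D₁
      rw [hgsucc k]; exact (hspecS k).2.2.2.2.2.1
  have hSQ : ∀ k, (x (Qf k), w) ∈ SetRel.comp D₁ D₁ := by
    intro k
    cases k with
    | zero => exact hspec0.2.2.2.2.2.2
    | succ k =>
      show (x (g (k + 1)).2, w) ∈ SetRel.comp D₁ D₁
      rw [hgsucc k]; exact (hspecS k).2.2.2.2.2.2
  -- ordering
  have hPQle : ∀ k, Pf k ≤ Qf k := fun k => by have := hPQ k; omega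
  have hQltP : ∀ k k', k < k' → Qf k < Pf k' := by
    intro k k' h
    induction k' with
    | zero => omega
    | succ k'' ih =>
      rcases Nat.lt_succ_iff_lt_or_eq.mp h with h' | h'
      · exact lt_of_lt_of_le (ih h') (le_trans (hPQle k'') (le_of_lt (hQP k'')))
      · subst h'; exact hQP k
  have hPmono0 : ∀ k, Pf 0 ≤ Pf k := by
    intro k
    cases k with
    | zero => exact le_refl _
    | succ k => exact le_trans (hPQle 0) (le_of_lt (hQltP 0 (k + 1) (by omega)))
  have hdisj : ∀ k k' j, Pf k ≤ j → j ≤ Qf k → Pf k' ≤ j → j ≤ Qf k' → k = k' := by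
    intro k k' j h1 h2 h3 h4
    by_contra hne
    rcases Nat.lt_or_ge k k' with h | h
    · have := hQltP k k' h; omega
    · have hk : k' < k := by omega
      have := hQltP k' k hk; omega
  have hphase : ∀ a, a % Λ = ρ → lam ∣ (a - ρ) := by
    intro a hA
    have h2 := Nat.div_add_mod a Λ
    rw [hA] at h2
    exact dvd_trans hlamΛ ⟨a / Λ, by omega⟩
  have hρle : ∀ k, ρ ≤ Pf k := by
    intro k
    have := hPmod k
    rw [← this]
    exact Nat.mod_le _ _
  -- the glued pseudo-orbit
  set inB : ℕ → Prop := fun j => ∃ k, Pf k ≤ j ∧ j ≤ Qf k with hinB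
  set y : ℕ → X := fun j => if inB j then x j else cl (j - ρ) with hy
  have hyBlock : ∀ j, inB j → y j = x j := by
    intro j h
    show (if inB j then x j else cl (j - ρ)) = x j
    rw [if_pos h]
  have hyGap : ∀ j, ¬ inB j → y j = cl (j - ρ) := by
    intro j h
    show (if inB j then x j else cl (j - ρ)) = cl (j - ρ)
    rw [if_neg h]
  have hyCR : ∀ j, y j ∈ CR f := by
    intro j
    by_cases h : inB j
    · rw [hyBlock j h]; exact hxCR j
    · rw [hyGap j h]; exact hclCR _
  -- the key step lemma
  have hstep : ∀ j, Pf 0 ≤ j → (f (y j), y (j + 1)) ∈ D := by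
    intro j hj
    by_cases h1 : inB j
    · obtain ⟨k, hk1, hk2⟩ := h1
      have hyj : y j = x j := hyBlock j ⟨k, hk1, hk2⟩
      rcases Nat.lt_or_ge j (Qf k) with hlt | hge
      · -- inside a block
        have h2 : inB (j + 1) := ⟨k, by omega, by omega⟩
        rw [hyj, hyBlock _ h2]
        exact hx j (hTblk k j hk1 (by omega))
      · -- j = Qf k
        have hjq : j = Qf k := by omega
        have hjmod : j % Λ = ρ := by rw [hjq]; exact hQmod k
        have hjρ : ρ ≤ j := le_trans (hρle k) hk1
        have hSxj : (x j, w) ∈ SetRel.comp D₁ D₁ := by rw [hjq]; exact hSQ k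
        by_cases h2 : inB (j + 1)
        · -- next block starts immediately: forces Λ = 1
          obtain ⟨k', h1', h2'⟩ := h2
          have hPk' : Pf k' = j + 1 := by
            rcases Nat.lt_or_ge j (Pf k') with h | h
            · omega
            · have hkk : k = k' := hdisj k k' j hk1 (by omega) h (by omega)
              subst hkk
              omega
          have hmodeq : Qf k ≡ Pf k' [MOD Λ] := by
            unfold Nat.ModEq
            rw [hQmod, hPmod]
          have hdvd1 : Λ ∣ Pf k' - Qf k := (Nat.modEq_iff_dvd' (by omega)).mp hmodeq
          have hΛeq : Λ = 1 := Nat.dvd_one.mp (by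
            rwa [show Pf k' - Qf k = 1 by omega] at hdvd1)
          have hlameq : lam = 1 := Nat.dvd_one.mp (hΛeq ▸ hlamΛ)
          have hcl1w : cl 1 = w := hclw 1 (by rw [hlameq])
          have s1 : (f (x j), f w) ∈ B := hSf hSxj
          have s2 : (f w, w) ∈ B := by
            have := hclstep 0
            rwa [hcl0, hcl1w] at this
          have s3 : (w, x (j + 1)) ∈ B := by
            have := hSsymm (hSP k')
            rw [hPk'] at this
            exact hSB this
          rw [hyj, hyBlock _ ⟨k', h1', h2'⟩]
          exact hcomp3 s1 s2 s3
        · -- gap after the block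
          obtain ⟨d', hd'⟩ := hphase j hjmod
          have hcl1 : cl (j + 1 - ρ) = cl 1 := by
            show c ((j + 1 - ρ) % lam) = c (1 % lam)
            rw [show j + 1 - ρ = lam * d' + 1 by omega, Nat.mul_add_mod]
          have s1 : (f (x j), f w) ∈ B := hSf hSxj
          have s2 : (f w, cl 1) ∈ B := by
            have := hclstep 0
            rwa [hcl0] at this
          rw [hyj, hyGap _ h2, hcl1]
          exact hcomp2 s1 s2
    · -- j is in a gap
      have hjρ : ρ ≤ j := le_trans (hρle 0) hj
      have hyj : y j = cl (j - ρ) := hyGap j h1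
      by_cases h2 : inB (j + 1)
      · obtain ⟨k', h1', h2'⟩ := h2
        have hPk' : Pf k' = j + 1 := by
          rcases Nat.lt_or_ge j (Pf k') with h | h
          · omega
          · exact absurd ⟨k', h, by omega⟩ h1
        have hdvd2 : lam ∣ (j + 1 - ρ) := by
          have := hphase (Pf k') (hPmod k')
          rwa [hPk'] at this
        have hclw2 : cl (j + 1 - ρ) = w := hclw _ hdvd2
        have s1 : (f (cl (j - ρ)), cl (j - ρ + 1)) ∈ B := hclstep _
        have s2 : (w, x (j + 1)) ∈ B := by
          have := hSsymm (hSP k')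
          rw [hPk'] at this
          exact hSB this
        rw [hyj, hyBlock _ ⟨k', h1', h2'⟩]
        have hreidx : j - ρ + 1 = j + 1 - ρ := by omega
        rw [hreidx, hclw2] at s1
        exact hcomp2 s1 s2
      · rw [hyj, hyGap _ h2]
        have s1 : (f (cl (j - ρ)), cl (j - ρ + 1)) ∈ B := hclstep _
        have hreidx : j - ρ + 1 = j + 1 - ρ := by omega
        rw [hreidx] at s1
        exact hBD s1
  -- apply the tracing hypothesis to the shifted orbit
  set Y : ℕ → X := fun i => y (Pf 0 + i) with hY
  have hYCR : ∀ i, Y i ∈ CR f := fun i => hyCR _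
  have hYpo : PseudoOrbitOn f D Y Set.univ := by
    intro i _
    show (f (y (Pf 0 + i)), y (Pf 0 + (i + 1))) ∈ D
    rw [← Nat.add_assoc]
    exact hstep (Pf 0 + i) (Nat.le_add_right _ _)
  obtain ⟨z₀, hz₀⟩ := htr Y hYCR hYpo
  obtain ⟨z, hz⟩ := hsurj.iterate (Pf 0) z₀
  refine ⟨⋃ k, Set.Icc (Pf k) (Qf k), ?_, ?_, z, ?_⟩
  · intro j hj
    obtain ⟨k, hk⟩ := mem_iUnion.mp hj
    exact hTblk k j hk.1 hk.2
  · intro n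
    refine ⟨Pf n, fun i hi => mem_iUnion.mpr ⟨n, ?_⟩⟩
    have := hPQ n
    exact ⟨Nat.le_add_right _ _, by omega⟩
  · intro j hj
    obtain ⟨k, hk⟩ := mem_iUnion.mp hj
    have hP0j : Pf 0 ≤ j := le_trans (hPmono0 k) hk.1
    have h1 : f^[j] z = f^[j - Pf 0] z₀ := by
      conv_lhs => rw [show j = (j - Pf 0) + Pf 0 by omega]
      rw [Function.iterate_add_apply, hz]
    rw [h1]
    have h2 := hz₀ (j - Pf 0) (Set.mem_univ _)
    have hYj : Y (j - Pf 0) = x j := by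
      show y (Pf 0 + (j - Pf 0)) = x j
      rw [show Pf 0 + (j - Pf 0) = j by omega]
      exact hyBlock j ⟨k, hk.1, hk.2⟩
    rwa [hYj] at h2
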